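/- (Floer–Picard lemma, invertible case.) Let X, B be Banach spaces and f : X → B a map of the form f(x) = f(0) + D x + N(x), where D : X → B is a bounded linear isomorphism with bounded inverse Q = D^{-1}, and N satisfies N(0) = 0 and ‖N(x) - N(y)‖ ≤ C‖x-y‖(‖x‖+‖y‖) for all x, y and some constant C > 0. If ‖Q f(0)‖ ≤ 1/(8 C ‖Q‖), then f has a unique zero x* in the closed ball of radius 1/(4 C ‖Q‖) around 0, and moreover ‖x*‖ ≤ 2‖Q f(0)‖. -/

import Mathlib

/-- Floer–Picard lemma, invertible case: if `f(x) = f(0) + Dx + N(x)` with `D`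
an invertible bounded operator with bounded inverse `Q`, `N` quadratic, and
`‖Qf(0)‖ ≤ 1/(8C‖Q‖)`, then `f` has a unique zero in the ball of radius
`1/(4C‖Q‖)`, and this zero `x*` satisfies `‖x*‖ ≤ 2‖Qf(0)‖`. -/
theorem floer_picard_invertible (X B : Type*)
    [NormedAddCommGroup X] [NormedSpace ℝ X] [CompleteSpace X]
    [NormedAddCommGroup B] [NormedSpace ℝ B]
    (f : X → B) (D : X →L[ℝ] B) (Q : B →L[ℝ] X)
    (hQD : ∀ x, Q (D x) = x) (hDQ : ∀ b, D (Q b) = b)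
    (N : X → B) (hf : ∀ x, f x = f 0 + D x + N x) (hN0 : N 0 = 0)
    (C : ℝ) (hC : 0 < C)
    (hN : ∀ x y : X, ‖N x - N y‖ ≤ C * ‖x - y‖ * (‖x‖ + ‖y‖))
    (hsmall : ‖Q (f 0)‖ ≤ 1 / (8 * C * ‖Q‖)) :
    (∃! x : X, ‖x‖ ≤ 1 / (4 * C * ‖Q‖) ∧ f x = 0) ∧
    (∀ x : X, ‖x‖ ≤ 1 / (4 * C * ‖Q‖) → f x = 0 → ‖x‖ ≤ 2 * ‖Q (f 0)‖) := by
  -- Trivial case: `‖Q‖ = 0` forces `X` and `B` to be trivial.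
  rcases eq_or_lt_of_le (norm_nonneg Q) with hQ0 | hQ
  · have hQzero : Q = 0 := by
      ext b
      have h1 := Q.le_opNorm b
      rw [← hQ0] at h1
      simp only [zero_mul] at h1
      simpa using le_antisymm h1 (norm_nonneg _)
    have hXzero : ∀ x : X, x = 0 := by
      intro x
      have h := hQD x
      rw [hQzero] at h
      simpa using h.symm
    have hBzero : ∀ b : B, b = 0 := by
      intro b
      have h := hDQ b
      rw [hQzero] at h
      simpa using h.symm
    have hr0 : (1 : ℝ) / (4 * C * ‖Q‖) = 0 := by rw [← hQ0]; simp
    refine ⟨⟨0, ⟨by simp [hr0], hBzero _⟩, fun y _ => hXzero y⟩, ?_⟩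
    intro x _ _
    rw [hXzero x]
    simp [norm_nonneg]
  -- Main case.
  set r : ℝ := 1 / (4 * C * ‖Q‖) with hr
  have hrpos : 0 < r := by positivity
  have hCQr : C * ‖Q‖ * r = 1 / 4 := by
    rw [hr]; field_simp
  have hQf : ∀ x, Q (f x) = Q (f 0) + x + Q (N x) := by
    intro x
    rw [hf x]
    simp [map_add, hQD]
  have hzero_iff : ∀ x, f x = 0 ↔ Q (f x) = 0 := by
    intro x
    constructor
    · intro h; simp [h]
    · intro h
      have hx := hDQ (f x)
      rw [h] at hx
      simpa using hx.symm
  set F : X → X := fun x => -Q (f 0) - Q (N x) with hFdef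
  have hFval : ∀ x, F x = -Q (f 0) - Q (N x) := fun x => rfl
  have hQfF : ∀ x, Q (f x) = x - F x := by
    intro x
    rw [hQf, hFval]
    abel
  have hfix : ∀ x, F x = x ↔ f x = 0 := by
    intro x
    rw [hzero_iff, hQfF, sub_eq_zero]
    exact eq_comm
  -- Norm of N
  have hNx : ∀ x : X, ‖N x‖ ≤ C * ‖x‖ * ‖x‖ := by
    intro x
    have := hN x 0
    simpa [hN0] using this
  -- Contraction estimate on the ball
  have hlip : ∀ x y : X, ‖x‖ ≤ r → ‖y‖ ≤ r → ‖F x - F y‖ ≤ (1/2) * ‖x - y‖ := by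
    intro x y hx hy
    have h1 : F x - F y = Q (N y - N x) := by
      rw [hFval, hFval, map_sub]; abel
    rw [h1]
    calc ‖Q (N y - N x)‖ ≤ ‖Q‖ * ‖N y - N x‖ := Q.le_opNorm _
      _ ≤ ‖Q‖ * (C * ‖y - x‖ * (‖y‖ + ‖x‖)) := by
          exact mul_le_mul_of_nonneg_left (hN y x) (norm_nonneg Q)
      _ ≤ ‖Q‖ * (C * ‖y - x‖ * (2 * r)) := by
          apply mul_le_mul_of_nonneg_left _ (norm_nonneg Q)
          apply mul_le_mul_of_nonneg_left _ (by positivity)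
          linarith
      _ = (2 * (C * ‖Q‖ * r)) * ‖y - x‖ := by ring
      _ = (1/2) * ‖x - y‖ := by rw [hCQr, norm_sub_rev]; ring
  -- F maps the closed ball into itself
  have hmaps : ∀ x : X, ‖x‖ ≤ r → ‖F x‖ ≤ r := by
    intro x hx
    have h1 : ‖F x‖ ≤ ‖Q (f 0)‖ + ‖Q‖ * ‖N x‖ := by
      rw [hFval]
      calc ‖-Q (f 0) - Q (N x)‖ ≤ ‖-Q (f 0)‖ + ‖Q (N x)‖ := norm_sub_le _ _
        _ ≤ ‖Q (f 0)‖ + ‖Q‖ * ‖N x‖ := by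
            rw [norm_neg]; exact add_le_add le_rfl (Q.le_opNorm _)
    have h2 : ‖Q‖ * ‖N x‖ ≤ ‖Q‖ * (C * ‖x‖ * ‖x‖) :=
      mul_le_mul_of_nonneg_left (hNx x) (norm_nonneg Q)
    have h3 : ‖Q‖ * (C * ‖x‖ * ‖x‖) ≤ ‖Q‖ * (C * r * r) := by
      apply mul_le_mul_of_nonneg_left _ (norm_nonneg Q)
      have h0 := norm_nonneg x
      nlinarith [mul_le_mul hx hx h0 hrpos.le]
    have h4 : ‖Q‖ * (C * r * r) = r / 4 := by
      have : ‖Q‖ * (C * r * r) = (C * ‖Q‖ * r) * r := by ring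
      rw [this, hCQr]; ring
    have h5 : ‖Q (f 0)‖ ≤ r / 2 := by
      have : (1 : ℝ) / (8 * C * ‖Q‖) = r / 2 := by
        rw [hr]; field_simp; ring
      linarith [hsmall, this ▸ hsmall]
    linarith
  -- The bound for any zero in the ball
  have hbound : ∀ x : X, ‖x‖ ≤ r → f x = 0 → ‖x‖ ≤ 2 * ‖Q (f 0)‖ := by
    intro x hx hfx
    have hFx : F x = x := (hfix x).mpr hfx
    have h1 : ‖x‖ ≤ ‖Q (f 0)‖ + ‖Q‖ * (C * ‖x‖ * ‖x‖) := by
      calc ‖x‖ = ‖-Q (f 0) - Q (N x)‖ := by rw [← hFval x, hFx]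
        _ ≤ ‖-Q (f 0)‖ + ‖Q (N x)‖ := norm_sub_le _ _
        _ ≤ ‖Q (f 0)‖ + ‖Q‖ * (C * ‖x‖ * ‖x‖) := by
            rw [norm_neg]
            exact add_le_add le_rfl ((Q.le_opNorm _).trans
              (mul_le_mul_of_nonneg_left (hNx x) (norm_nonneg Q)))
    have h2 : ‖Q‖ * (C * ‖x‖ * ‖x‖) ≤ (1/4) * ‖x‖ := by
      have h3 : C * ‖Q‖ * ‖x‖ ≤ 1/4 := by
        calc C * ‖Q‖ * ‖x‖ ≤ C * ‖Q‖ * r := by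
              apply mul_le_mul_of_nonneg_left hx (by positivity)
          _ = 1/4 := hCQr
      nlinarith [norm_nonneg x]
    linarith [norm_nonneg (Q (f 0))]
  -- Uniqueness
  have huniq : ∀ x y : X, ‖x‖ ≤ r → ‖y‖ ≤ r → f x = 0 → f y = 0 → x = y := by
    intro x y hx hy hfx hfy
    have h1 : ‖x - y‖ ≤ (1/2) * ‖x - y‖ := by
      have := hlip x y hx hy
      rwa [(hfix x).mpr hfx, (hfix y).mpr hfy] at this
    have : ‖x - y‖ ≤ 0 := by linarith
    have : x - y = 0 := by
      have := norm_nonneg (x - y)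
      exact norm_eq_zero.mp (le_antisymm ‹‖x - y‖ ≤ 0› this ▸ rfl)
    exact sub_eq_zero.mp this
  -- Existence via Banach fixed point theorem on the closed ball
  set s : Set X := Metric.closedBall (0 : X) r with hs
  have hs_closed : IsClosed s := Metric.isClosed_closedBall
  haveI : CompleteSpace s := hs_closed.completeSpace_coe
  haveI : Nonempty s := ⟨⟨0, by simp [hs, le_of_lt hrpos]⟩⟩
  have hmem : ∀ x : X, x ∈ s ↔ ‖x‖ ≤ r := by
    intro x; simp [hs, Metric.mem_closedBall, dist_zero_right]
  set F' : s → s := fun x => ⟨F x.1, (hmem _).mpr (hmaps x.1 ((hmem _).mp x.2))⟩ with hF'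
  have hcontr : ContractingWith (1/2 : NNReal) F' := by
    constructor
    · rw [← NNReal.coe_lt_coe]
      norm_num
    · apply LipschitzWith.of_dist_le_mul
      intro x y
      have := hlip x.1 y.1 ((hmem _).mp x.2) ((hmem _).mp y.2)
      simpa [hF', Subtype.dist_eq, dist_eq_norm] using this
  set xs := hcontr.fixedPoint F' with hxs
  have hxsfix : F' xs = xs := hcontr.fixedPoint_isFixedPt
  have hxfix : F xs.1 = xs.1 := congrArg Subtype.val hxsfix
  have hxzero : f xs.1 = 0 := (hfix xs.1).mp hxfix
  have hxball : ‖xs.1‖ ≤ r := (hmem _).mp xs.2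
  exact ⟨⟨xs.1, ⟨hxball, hxzero⟩, fun y ⟨hy1, hy2⟩ => huniq y xs.1 hy1 hxball hy2 hxzero⟩,
    hbound⟩
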